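/- arXiv:2509.20880 — 5 statements merged into one kernel-verified Lean document; each statement's English description precedes it below -/
import Mathlib

section
/- The map χ_{n,m} is a bijection of F_2^n if and only if m does not divide n. Moreover, if m ∤ n, then its compositional inverse is χ_{n,m}^{-1} = θ_{m,0} + θ_{m,1} + θ_{m,2} + ⋯ + θ_{m,ℓ} with ℓ = ⌊n/m⌋; explicitly, the i-th coordinate of χ_{n,m}^{-1}(x) equals x_i + Σ_{k=1}^{ℓ} x_{i+mk} · ∏_{1 ≤ j ≤ mk−1, m ∤ j} (x_{i+j} + 1). -/
/-- Index `i + j` computed modulo `n`, for `i : Fin n` and `j : ℕ`. -/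
def idx {n : ℕ} (i : Fin n) (j : ℕ) : Fin n :=
  ⟨(i.val + j) % n, Nat.mod_lt _ i.pos⟩

/-- The map `θ_{m,k} : F_2^n → F_2^n`; `θ_{m,0}` is the identity map, and for `k ≥ 1`,
`(θ_{m,k}(x))_i = x_{i+mk} · ∏_{1 ≤ j ≤ mk−1, m ∤ j} (x_{i+j} + 1)` (indices mod `n`). -/
def theta (n m k : ℕ) : (Fin n → ZMod 2) → Fin n → ZMod 2 :=
  if k = 0 then id
  else fun x i =>
    x (idx i (m * k)) *
      ∏ j ∈ (Finset.Ico 1 (m * k)).filter (fun j => ¬ m ∣ j), (x (idx i j) + 1)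

namespace Stmt14Aux

lemma zmod2_mul_succ (a : ZMod 2) : a * (a + 1) = 0 := by revert a; decide

lemma idx_zero {n : ℕ} (i : Fin n) : idx i 0 = i := by
  simp [idx, Nat.mod_eq_of_lt i.isLt]

lemma idx_idx {n : ℕ} (i : Fin n) (a b : ℕ) : idx (idx i a) b = idx i (a + b) := by
  simp [idx, Nat.mod_add_mod, Nat.add_assoc]

lemma idx_congr {n : ℕ} (i : Fin n) {a b : ℕ} (h : a % n = b % n) : idx i a = idx i b := by
  simp only [idx, Fin.mk.injEq, Nat.add_mod i.val a n, Nat.add_mod i.val b n, h]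

/-- Uniform product formula for `theta`. -/
lemma theta_eq (n m k : ℕ) (x : Fin n → ZMod 2) (i : Fin n) :
    theta n m k x i =
      x (idx i (m * k)) *
        ∏ j ∈ Finset.range (m * k), (if m ∣ j then 1 else x (idx i j) + 1) := by
  rcases k with _ | k
  · simp [theta, idx_zero]
  · rw [theta, if_neg (Nat.succ_ne_zero k)]
    congr 1
    rw [Finset.range_eq_Ico]
    have h1 : (Finset.Ico 1 (m * (k+1))).filter (fun j => ¬ m ∣ j)
        = (Finset.Ico 0 (m * (k+1))).filter (fun j => ¬ m ∣ j) := by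
      ext j
      simp only [Finset.mem_filter, Finset.mem_Ico]
      constructor
      · rintro ⟨⟨h1, h2⟩, h3⟩; exact ⟨⟨Nat.zero_le _, h2⟩, h3⟩
      · rintro ⟨⟨_, h2⟩, h3⟩
        refine ⟨⟨?_, h2⟩, h3⟩
        rcases Nat.eq_zero_or_pos j with h | h
        · exact absurd (h ▸ dvd_zero m) h3
        · exact h
    rw [h1, Finset.prod_filter]
    refine Finset.prod_congr rfl fun j _ => ?_
    by_cases hd : m ∣ j <;> simp [hd]

/-- Recursion: `θ_{k+1}(x)_i = P_i(x) · θ_k(x)_{i+m}`. -/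
lemma theta_succ (n m k : ℕ) (x : Fin n → ZMod 2) (i : Fin n) :
    theta n m (k+1) x i =
      (∏ j ∈ Finset.range m, (if m ∣ j then 1 else x (idx i j) + 1)) *
        theta n m k x (idx i m) := by
  rw [theta_eq, theta_eq]
  have hmk : m * (k+1) = m + m * k := by ring
  rw [hmk, Finset.prod_range_add]
  have h1 : ∀ j : ℕ, (if m ∣ (m + j) then (1:ZMod 2) else x (idx i (m + j)) + 1)
      = (if m ∣ j then 1 else x (idx (idx i m) j) + 1) := by
    intro j
    rw [idx_idx]
    by_cases hd : m ∣ j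
    · rw [if_pos hd, if_pos ((Nat.dvd_add_right (dvd_refl m)).mpr hd)]
    · rw [if_neg hd, if_neg (fun h => hd ((Nat.dvd_add_right (dvd_refl m)).mp h))]
  have h2 : x (idx i (m + m * k)) = x (idx (idx i m) (m * k)) := by rw [idx_idx]
  rw [h2, Finset.prod_congr rfl (fun j _ => h1 j)]
  ring

/-- The χ map coordinatewise. -/
lemma chi_apply (n m : ℕ) (x : Fin n → ZMod 2) (t : Fin n) :
    (theta n m 0 + theta n m 1) x t =
      x t + x (idx t m) * ∏ u ∈ Finset.range m, (if m ∣ u then 1 else x (idx t u) + 1) := by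
  have h0 : theta n m 0 x t = x t := by simp [theta]
  have h1 := theta_eq n m 1 x t
  rw [mul_one] at h1
  simp only [Pi.add_apply, h0, h1]

/-- Key vanishing lemma D. -/
lemma keyD (n m : ℕ) {s : ℕ} (hs1 : 1 ≤ s) (hs2 : s < m) (k : ℕ)
    (x : Fin n → ZMod 2) (i : Fin n) :
    x (idx i (s + m)) *
      (∏ u ∈ Finset.range m, (if m ∣ u then 1 else x (idx (idx i s) u) + 1)) *
        theta n m k x (idx i m) = 0 := by
  rcases k with _ | k
  · -- θ_0 = id : use factor u = m - s of the product
    have h0 : theta n m 0 x (idx i m) = x (idx i m) := by simp [theta]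
    rw [h0]
    have hmem : m - s ∈ Finset.range m := Finset.mem_range.mpr (by omega)
    rw [← Finset.mul_prod_erase _ _ hmem]
    have hnd : ¬ m ∣ (m - s) := by
      intro h
      have := Nat.le_of_dvd (by omega) h
      omega
    rw [if_neg hnd, idx_idx]
    have hss : s + (m - s) = m := by omega
    rw [hss]
    have := zmod2_mul_succ (x (idx i m))
    linear_combination (x (idx i (s + m)) *
      ∏ u ∈ (Finset.range m).erase (m - s), (if m ∣ u then 1 else x (idx (idx i s) u) + 1)) * this
  · -- θ_{k+1} : use factor j = s of its product
    rw [theta_eq]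
    have hmem : s ∈ Finset.range (m * (k+1)) := by
      refine Finset.mem_range.mpr (lt_of_lt_of_le hs2 ?_)
      exact Nat.le_mul_of_pos_right m (Nat.succ_pos k)
    rw [← Finset.mul_prod_erase _ _ hmem]
    have hnd : ¬ m ∣ s := by
      intro h
      have := Nat.le_of_dvd (by omega) h
      omega
    rw [if_neg hnd, idx_idx, idx_idx, Nat.add_comm m s]
    have := zmod2_mul_succ (x (idx i (s + m)))
    linear_combination ((∏ u ∈ Finset.range m, (if m ∣ u then 1 else x (idx (idx i s) u) + 1)) *
      (x (idx i (m + m * (k+1))) *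
        ∏ j ∈ (Finset.range (m * (k+1))).erase s,
          (if m ∣ j then 1 else x (idx (idx i m) j) + 1))) * this

/-- Key substitution lemma D'. -/
lemma keyD' (n m k : ℕ) (x : Fin n → ZMod 2) (i : Fin n) :
    (∏ u ∈ Finset.range m, (if m ∣ u then 1 else (theta n m 0 + theta n m 1) x (idx i u) + 1)) *
        theta n m k x (idx i m) =
    (∏ u ∈ Finset.range m, (if m ∣ u then 1 else x (idx i u) + 1)) *
        theta n m k x (idx i m) := by
  classical
  have H : ∀ S : Finset ℕ, S ⊆ Finset.range m →
      (∏ u ∈ S, (if m ∣ u then 1 else (theta n m 0 + theta n m 1) x (idx i u) + 1)) *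
          theta n m k x (idx i m) =
      (∏ u ∈ S, (if m ∣ u then 1 else x (idx i u) + 1)) *
          theta n m k x (idx i m) := by
    intro S
    induction S using Finset.induction_on with
    | empty => intro _; simp
    | @insert a S ha ih =>
      intro hsub
      have hS : S ⊆ Finset.range m := (Finset.subset_insert a S).trans hsub
      have ham : a < m := Finset.mem_range.mp (hsub (Finset.mem_insert_self a S))
      rw [Finset.prod_insert ha, Finset.prod_insert ha]
      by_cases hd : m ∣ a
      · rw [if_pos hd, if_pos hd, one_mul, one_mul]; exact ih hS
      · have ha1 : 1 ≤ a := by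
          rcases Nat.eq_zero_or_pos a with h | h
          · exact absurd (h ▸ dvd_zero m) hd
          · exact h
        rw [if_neg hd, if_neg hd]
        have h3 : (theta n m 0 + theta n m 1) x (idx i a) =
            x (idx i a) + x (idx i (a + m)) *
              ∏ u ∈ Finset.range m, (if m ∣ u then 1 else x (idx (idx i a) u) + 1) := by
          rw [chi_apply, idx_idx]
        have hc := keyD n m ha1 ham k x i
        have ih' := ih hS
        set T := theta n m k x (idx i m)
        set Pc := ∏ u ∈ S, (if m ∣ u then 1 else (theta n m 0 + theta n m 1) x (idx i u) + 1)
        set Px := ∏ u ∈ S, (if m ∣ u then 1 else x (idx i u) + 1)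
        set Q := ∏ u ∈ Finset.range m, (if m ∣ u then 1 else x (idx (idx i a) u) + 1)
        linear_combination ((theta n m 0 + theta n m 1) x (idx i a) + 1) * ih' +
          Px * hc + (Px * T) * h3
  exact H (Finset.range m) (le_refl _)

/-- Lemma C: `θ_k(χ(x)) = θ_k(x) + θ_{k+1}(x)` unconditionally. -/
lemma lemC (n m k : ℕ) (x : Fin n → ZMod 2) : ∀ i : Fin n,
    theta n m k ((theta n m 0 + theta n m 1) x) i = theta n m k x i + theta n m (k+1) x i := by
  induction k with
  | zero =>
    intro i
    have h0 : ∀ y : Fin n → ZMod 2, theta n m 0 y i = y i := by intro y; simp [theta]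
    rw [h0]
    simp [Pi.add_apply, theta]
  | succ k ih =>
    intro i
    rw [theta_succ, ih (idx i m), mul_add, keyD' n m k x i, keyD' n m (k+1) x i,
      theta_succ n m k x i, theta_succ n m (k+1) x i]

/-- Lemma B: `θ_{⌊n/m⌋+1} = 0` when `m ∤ n`. -/
lemma lemB (n m : ℕ) (hn : 1 ≤ n) (hm : 2 ≤ m) (hmn : ¬ m ∣ n)
    (x : Fin n → ZMod 2) (i : Fin n) : theta n m (n / m + 1) x i = 0 := by
  have hdm := Nat.div_add_mod n m
  have hmod := Nat.mod_lt n (show 0 < m by omega)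
  have hb : n < m * (n / m + 1) := by
    have : m * (n / m + 1) = m * (n / m) + m := by ring
    omega
  set b := m * (n / m + 1) with hbdef
  set j0 := b - n with hj0
  rw [theta_eq]
  have hmem : j0 ∈ Finset.range b := Finset.mem_range.mpr (by omega)
  rw [← Finset.mul_prod_erase _ _ hmem]
  have hnd : ¬ m ∣ j0 := by
    intro h
    have hdb : m ∣ b := Dvd.intro _ rfl
    have : m ∣ (b - j0) := Nat.dvd_sub hdb h
    have hbn : b - j0 = n := by omega
    exact hmn (hbn ▸ this)
  rw [if_neg hnd]
  have hidx : idx i j0 = idx i b := by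
    refine idx_congr i ?_
    have : b = j0 + n := by omega
    rw [this, Nat.add_mod_right]
  rw [hidx]
  have := zmod2_mul_succ (x (idx i b))
  linear_combination (∏ u ∈ (Finset.range b).erase j0, (if m ∣ u then 1 else x (idx i u) + 1)) * this

end Stmt14Aux

open Stmt14Aux

/-- `χ_{n,m} = θ_{m,0} + θ_{m,1}` is a bijection iff `m ∤ n`, and in that case
its compositional inverse is `θ_{m,0} + θ_{m,1} + ⋯ + θ_{m,ℓ}`, given coordinatewise by the
stated explicit formula. -/
theorem stmt14 (n m : ℕ) (hn : 1 ≤ n) (hm : 2 ≤ m) :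
    (Function.Bijective (theta n m 0 + theta n m 1) ↔ ¬ m ∣ n) ∧
    (¬ m ∣ n →
      ((theta n m 0 + theta n m 1) ∘
          (∑ k ∈ Finset.range (n / m + 1), theta n m k) = id ∧
       (∑ k ∈ Finset.range (n / m + 1), theta n m k) ∘
          (theta n m 0 + theta n m 1) = id ∧
       ∀ (x : Fin n → ZMod 2) (i : Fin n),
         (∑ k ∈ Finset.range (n / m + 1), theta n m k) x i =
           x i + ∑ k ∈ Finset.Icc 1 (n / m),
             x (idx i (m * k)) *
               ∏ j ∈ (Finset.Ico 1 (m * k)).filter (fun j => ¬ m ∣ j),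
                 (x (idx i j) + 1))) := by
  set χ := theta n m 0 + theta n m 1 with hχ
  set S := ∑ k ∈ Finset.range (n / m + 1), theta n m k with hSdef
  -- If m ∤ n : S ∘ χ = id
  have hSχ : ¬ m ∣ n → ∀ x : Fin n → ZMod 2, S (χ x) = x := by
    intro hmn x
    funext i
    have hsum : S (χ x) i = ∑ k ∈ Finset.range (n / m + 1), theta n m k (χ x) i := by
      rw [hSdef]
      simp [Finset.sum_apply]
    rw [hsum]
    have h1 : ∀ k ∈ Finset.range (n / m + 1),
        theta n m k (χ x) i = theta n m (k+1) x i - theta n m k x i := by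
      intro k _
      rw [lemC n m k x i, CharTwo.sub_eq_add]
      ring
    rw [Finset.sum_congr rfl h1, Finset.sum_range_sub (fun k => theta n m k x i)]
    rw [lemB n m hn hm hmn x i]
    have h0 : theta n m 0 x i = x i := by simp [theta]
    rw [h0, CharTwo.sub_eq_add, zero_add]
  -- If m ∣ n : χ is not injective
  have hnotinj : m ∣ n → ¬ Function.Injective χ := by
    intro hdvd hinj
    have hmn : m ≤ n := Nat.le_of_dvd (by omega) hdvd
    set x0 : Fin n → ZMod 2 := fun i => if i.val % m = m - 1 then 1 else 0 with hx0
    have hval : ∀ (t : Fin n) (j : ℕ),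
        x0 (idx t j) = if (t.val + j) % m = m - 1 then 1 else 0 := by
      intro t j
      simp only [hx0, idx]
      rw [Nat.mod_mod_of_dvd _ hdvd]
    have hchix0 : χ x0 = χ 0 := by
      have hz : χ (0 : Fin n → ZMod 2) = 0 := by
        funext t
        rw [hχ, chi_apply]
        simp
      rw [hz]
      funext t
      simp only [Pi.zero_apply]
      rw [hχ, chi_apply]
      by_cases h : t.val % m = m - 1
      · have e1 : x0 t = 1 := by rw [hx0]; simp [h]
        have e2 : x0 (idx t m) = 1 := by
          rw [hval]
          rw [Nat.add_mod_right, h]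
          simp
        have e3 : (∏ u ∈ Finset.range m,
            (if m ∣ u then 1 else x0 (idx t u) + 1)) = 1 := by
          refine Finset.prod_eq_one fun u hu => ?_
          by_cases hd : m ∣ u
          · rw [if_pos hd]
          · rw [if_neg hd]
            have hu1 : 1 ≤ u := by
              rcases Nat.eq_zero_or_pos u with h' | h'
              · exact absurd (h' ▸ dvd_zero m) hd
              · exact h'
            have hum : u < m := Finset.mem_range.mp hu
            have e4 : x0 (idx t u) = 0 := by
              rw [hval]
              have : (t.val + u) % m = u - 1 := by
                rw [Nat.add_mod, h]
                have hu' : u % m = u := Nat.mod_eq_of_lt hum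
                rw [hu']
                have : m - 1 + u = m + (u - 1) := by omega
                rw [this, Nat.add_mod_left]
                exact Nat.mod_eq_of_lt (by omega)
              rw [this]
              have : ¬ (u - 1 = m - 1) := by omega
              simp [this]
            rw [e4]; norm_num
        rw [e1, e2, e3]
        decide
      · have e1 : x0 t = 0 := by rw [hx0]; simp [h]
        have e2 : x0 (idx t m) = 0 := by
          rw [hval, Nat.add_mod_right]
          simp [h]
        rw [e1, e2]
        ring
    have hx0ne : x0 ≠ 0 := by
      intro h
      have hlt : m - 1 < n := by omega
      have := congrFun h ⟨m - 1, hlt⟩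
      rw [hx0] at this
      simp only [Pi.zero_apply] at this
      rw [Nat.mod_eq_of_lt (by omega)] at this
      simp at this
    exact hx0ne (hinj hchix0)
  have hbij : ¬ m ∣ n → Function.Bijective χ := by
    intro hmn
    have hinj : Function.Injective χ :=
      Function.LeftInverse.injective (g := S) (hSχ hmn)
    exact (Finite.injective_iff_bijective).mp hinj
  constructor
  · constructor
    · intro hb
      intro hdvd
      exact hnotinj hdvd hb.injective
    · exact hbij
  · intro hmn
    refine ⟨?_, ?_, ?_⟩
    · -- χ ∘ S = id
      funext y
      obtain ⟨a, ha⟩ := (hbij hmn).surjective y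
      have hS : S y = a := by rw [← ha, hSχ hmn a]
      show χ (S y) = y
      rw [hS, ha]
    · funext x
      show S (χ x) = x
      exact hSχ hmn x
    · intro x i
      have hLHS : S x i = ∑ k ∈ Finset.range (n / m + 1), theta n m k x i := by
        rw [hSdef]; simp [Finset.sum_apply]
      rw [hLHS, Finset.sum_range_succ' (fun k => theta n m k x i)]
      have h0 : theta n m 0 x i = x i := by simp [theta]
      rw [h0]
      have hIcc : ∑ k ∈ Finset.Icc 1 (n / m),
          x (idx i (m * k)) *
            ∏ j ∈ (Finset.Ico 1 (m * k)).filter (fun j => ¬ m ∣ j), (x (idx i j) + 1)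
          = ∑ k ∈ Finset.range (n / m), theta n m (k+1) x i := by
        rw [← Finset.Ico_add_one_right_eq_Icc, Finset.sum_Ico_eq_sum_range]
        refine Finset.sum_congr rfl fun k _ => ?_
        simp only [theta, if_neg (Nat.succ_ne_zero k)]
        rw [Nat.add_comm 1 k]
      rw [hIcc]
      ring
end

section
/- The compositional inverse χ_{n,m}^{-1} of χ_{n,m} has algebraic degree (m−1)ℓ + 1. -/
/-- The algebraic degree of a Boolean function: the least `d` such that the function is the
evaluation of a multivariate polynomial over `F_2` of total degree at most `d`. -/
noncomputable def algDeg {N : ℕ} (h : (Fin N → ZMod 2) → ZMod 2) : ℕ :=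
  sInf {d | ∃ p : MvPolynomial (Fin N) (ZMod 2),
    p.totalDegree ≤ d ∧ ∀ x, MvPolynomial.eval x p = h x}

/-- The algebraic degree of a vectorial map: the maximum of the algebraic degrees of its
coordinate functions. -/
noncomputable def mapDeg {N : ℕ} (F : (Fin N → ZMod 2) → Fin N → ZMod 2) : ℕ :=
  Finset.univ.sup fun i => algDeg fun x => F x i

open Finset

namespace S15

lemma zmod2_em (a : ZMod 2) : a = 0 ∨ a = 1 := by revert a; decide

/-- `J m k` : non-multiples of `m` in `[1, mk)` -/
def J (m k : ℕ) : Finset ℕ := (Finset.Ico 1 (m*k)).filter (fun j => ¬ m ∣ j)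

lemma idx_zero {n : ℕ} (i : Fin n) : idx i 0 = i := by
  apply Fin.ext; simp [idx, Nat.mod_eq_of_lt i.isLt]

lemma idx_idx {n : ℕ} (i : Fin n) (a b : ℕ) : idx (idx i a) b = idx i (a + b) := by
  apply Fin.ext; simp [idx, Nat.mod_add_mod, Nat.add_assoc]

lemma idx_addn {n : ℕ} (i : Fin n) (a : ℕ) : idx i (n + a) = idx i a := by
  apply Fin.ext
  have : (i : ℕ) + (n + a) = ((i : ℕ) + a) + n := by omega
  simp [idx, this, Nat.add_mod_right]

lemma idx_inj {n : ℕ} (i : Fin n) {a b : ℕ} (ha : a < n) (hb : b < n)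
    (h : idx i a = idx i b) : a = b := by
  have h' : ((i : ℕ) + a) % n = ((i : ℕ) + b) % n := congrArg Fin.val h
  have h2 : a % n = b % n := Nat.ModEq.add_left_cancel' _ h'
  rwa [Nat.mod_eq_of_lt ha, Nat.mod_eq_of_lt hb] at h2

lemma theta_apply {n : ℕ} (m k : ℕ) (x : Fin n → ZMod 2) (i : Fin n) :
    theta n m k x i = x (idx i (m*k)) * ∏ j ∈ J m k, (x (idx i j) + 1) := by
  rcases eq_or_ne k 0 with rfl | hk
  · simp [theta, J, idx_zero]
  · simp [theta, hk, J]

lemma prod_ind {α : Type*} (s : Finset α) (f : α → ZMod 2) :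
    ∏ j ∈ s, (f j + 1) = if ∀ j ∈ s, f j = 0 then 1 else 0 := by
  classical
  by_cases h : ∀ j ∈ s, f j = 0
  · rw [if_pos h]
    apply Finset.prod_eq_one
    intro j hj; rw [h j hj]; decide
  · rw [if_neg h]
    push_neg at h
    obtain ⟨j, hj, hfj⟩ := h
    have : f j = 1 := (zmod2_em _).resolve_left hfj
    exact Finset.prod_eq_zero hj (by rw [this]; decide)

lemma J_one (m : ℕ) (hm : 2 ≤ m) : J m 1 = Finset.Ico 1 m := by
  rw [J, mul_one]
  apply Finset.filter_true_of_mem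
  intro j hj hd
  rw [Finset.mem_Ico] at hj
  exact absurd (Nat.le_of_dvd (by omega) hd) (by omega)

lemma chi_apply {n m : ℕ} (hm : 2 ≤ m) (x : Fin n → ZMod 2) (b : Fin n) :
    (theta n m 0 + theta n m 1) x b
      = x b + x (idx b m) * ∏ t ∈ Finset.Ico 1 m, (x (idx b t) + 1) := by
  have h1 := theta_apply (n := n) m 1 x b
  rw [J_one m hm, mul_one] at h1
  have h0 : theta n m 0 x b = x b := by simp [theta]
  show theta n m 0 x b + theta n m 1 x b = _
  rw [h0, h1]

lemma mem_J {m k j : ℕ} : j ∈ J m k ↔ (1 ≤ j ∧ j < m*k) ∧ ¬ m ∣ j := by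
  simp [J, Finset.mem_filter, Finset.mem_Ico]

lemma forall_J_succ {m k : ℕ} (f : ℕ → ZMod 2) :
    (∀ j ∈ J m (k+1), f j = 0) ↔
      ((∀ j ∈ J m k, f j = 0) ∧ (∀ t ∈ Finset.Ico 1 m, f (m*k + t) = 0)) := by
  constructor
  · intro h
    refine ⟨fun j hj => h j ?_, fun t ht => h (m*k + t) ?_⟩
    · rw [mem_J] at hj ⊢
      exact ⟨⟨hj.1.1, lt_of_lt_of_le hj.1.2 (Nat.mul_le_mul_left m (Nat.le_succ k))⟩, hj.2⟩
    · rw [Finset.mem_Ico] at ht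
      rw [mem_J]
      refine ⟨⟨by omega, by rw [Nat.mul_succ]; omega⟩, ?_⟩
      intro hd
      have : m ∣ t := (Nat.dvd_add_right (Dvd.intro k rfl)).mp hd
      exact absurd (Nat.le_of_dvd (by omega) this) (by omega)
  · rintro ⟨h1, h2⟩ j hj
    rw [mem_J, Nat.mul_succ] at hj
    by_cases hc : j < m*k
    · exact h1 j (mem_J.mpr ⟨⟨hj.1.1, hc⟩, hj.2⟩)
    · have hj1 : j = m*k + (j - m*k) := by omega
      have ht1 : 1 ≤ j - m*k := by
        rcases Nat.eq_or_lt_of_le (Nat.le_of_not_lt hc) with he | hl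
        · exact absurd (he ▸ Dvd.intro k rfl) hj.2
        · omega
      rw [hj1]
      exact h2 _ (Finset.mem_Ico.mpr ⟨ht1, by omega⟩)

lemma crux {n m : ℕ} (x : Fin n → ZMod 2) (i : Fin n) {k j : ℕ}
    (hj : j ∈ J m k) (hjm : m*k ≤ j + m)
    (h1 : x (idx i (j+m)) = 1) (hQ : ∀ t ∈ Finset.Ico 1 m, x (idx i (j+t)) = 0) :
    x (idx i (m*k)) = 0 ∧ ¬ (∀ t ∈ Finset.Ico 1 m, x (idx i (m*k + t)) = 0) := by
  rw [mem_J] at hj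
  have hmk : m*k < j + m := by
    rcases Nat.eq_or_lt_of_le hjm with he | hl
    · exfalso
      exact hj.2 ((Nat.dvd_add_self_right).mp (he ▸ Dvd.intro k rfl))
    · exact hl
  constructor
  · have h0 : m*k = j + (m*k - j) := by omega
    rw [h0]
    exact hQ _ (Finset.mem_Ico.mpr ⟨by omega, by omega⟩)
  · intro hQ'
    have h0 : j + m = m*k + (j + m - m*k) := by omega
    have := hQ' (j + m - m*k) (Finset.mem_Ico.mpr ⟨by omega, by omega⟩)
    rw [← h0, h1] at this
    exact one_ne_zero this

lemma telescope {n m : ℕ} (hm : 2 ≤ m) (x : Fin n → ZMod 2) (i : Fin n) (k : ℕ) :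
    theta n m k ((theta n m 0 + theta n m 1) x) i
      = theta n m k x i + theta n m (k+1) x i := by
  classical
  have key : ∀ j : ℕ, ((theta n m 0 + theta n m 1) x) (idx i j)
      = x (idx i j) + x (idx i (j+m)) * ∏ t ∈ Finset.Ico 1 m, (x (idx i (j+t)) + 1) := by
    intro j
    rw [chi_apply hm x (idx i j)]
    simp only [idx_idx]
  rcases Nat.eq_zero_or_pos k with rfl | hk
  · -- k = 0 : trivial
    have h0 : ∀ z : Fin n → ZMod 2, theta n m 0 z i = z i := by intro z; simp [theta]
    rw [h0]
    rfl
  have hms : m * (k+1) = m*k + m := by ring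
  rw [theta_apply m k _ i, theta_apply m k x i, theta_apply m (k+1) x i, hms, key (m*k)]
  simp only [prod_ind]
  by_cases hP : ∀ j ∈ J m k, x (idx i j) = 0
  · by_cases hYP : ∀ j ∈ J m k, ((theta n m 0 + theta n m 1) x) (idx i j) = 0
    · rw [if_pos hYP, if_pos hP]
      have hP' : (∀ j ∈ J m (k+1), x (idx i j) = 0)
          ↔ (∀ t ∈ Finset.Ico 1 m, x (idx i (m*k+t)) = 0) := by
        rw [forall_J_succ]; exact and_iff_right hP
      by_cases hQ0 : ∀ t ∈ Finset.Ico 1 m, x (idx i (m*k + t)) = 0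
      · rw [if_pos hQ0, if_pos (hP'.mpr hQ0)]; ring
      · rw [if_neg hQ0, if_neg (fun h => hQ0 (hP'.mp h))]; ring
    · push_neg at hYP
      obtain ⟨j, hjJ, hYj⟩ := hYP
      have hYj1 : ((theta n m 0 + theta n m 1) x) (idx i j) = 1 :=
        (zmod2_em _).resolve_left hYj
      rw [key j, hP j hjJ, zero_add, prod_ind] at hYj1
      by_cases hQj : ∀ t ∈ Finset.Ico 1 m, x (idx i (j+t)) = 0
      · rw [if_pos hQj, mul_one] at hYj1
        have hjm : m*k ≤ j + m := by
          by_contra hc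
          push_neg at hc
          have hj2 : j + m ∈ J m k := by
            rw [mem_J] at hjJ ⊢
            exact ⟨⟨by omega, hc⟩, fun hd => hjJ.2 ((Nat.dvd_add_self_right).mp hd)⟩
          rw [hP _ hj2] at hYj1
          exact absurd hYj1 (by decide)
        obtain ⟨hx0, hnQ0⟩ := crux x i hjJ hjm hYj1 hQj
        have hnP' : ¬ (∀ j ∈ J m (k+1), x (idx i j) = 0) := by
          intro h
          exact hnQ0 ((forall_J_succ (fun j => x (idx i j))).mp h).2
        have hnYP : ¬ (∀ j' ∈ J m k, ((theta n m 0 + theta n m 1) x) (idx i j') = 0) :=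
          fun h => hYj (h j hjJ)
        rw [if_neg hnYP, if_neg hnP', if_pos hP, hx0]
        ring
      · rw [if_neg hQj, mul_zero] at hYj1
        exact absurd hYj1 (by decide)
  · have hnP' : ¬ (∀ j ∈ J m (k+1), x (idx i j) = 0) := by
      intro h
      exact hP ((forall_J_succ (fun j => x (idx i j))).mp h).1
    rw [if_neg hP, if_neg hnP', mul_zero, mul_zero, add_zero]
    by_cases hYP : ∀ j ∈ J m k, ((theta n m 0 + theta n m 1) x) (idx i j) = 0
    · have hS : ((J m k).filter (fun j => x (idx i j) = 1)).Nonempty := by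
        push_neg at hP
        obtain ⟨j, hj, hxj⟩ := hP
        exact ⟨j, Finset.mem_filter.mpr ⟨hj, (zmod2_em _).resolve_left hxj⟩⟩
      obtain ⟨js, hjs, hmax⟩ := Finset.exists_max_image _ id hS
      rw [Finset.mem_filter] at hjs
      have hYjs := hYP js hjs.1
      rw [key js, hjs.2, prod_ind] at hYjs
      by_cases hQj : ∀ t ∈ Finset.Ico 1 m, x (idx i (js+t)) = 0
      · rw [if_pos hQj, mul_one] at hYjs
        have hxm : x (idx i (js + m)) = 1 := by
          rcases zmod2_em (x (idx i (js+m))) with h | h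
          · rw [h] at hYjs; exact absurd hYjs (by decide)
          · exact h
        have hjm : m*k ≤ js + m := by
          by_contra hc
          push_neg at hc
          have hj2 : js + m ∈ (J m k).filter (fun j => x (idx i j) = 1) := by
            refine Finset.mem_filter.mpr ⟨?_, hxm⟩
            have := hjs.1
            rw [mem_J] at this ⊢
            exact ⟨⟨by omega, hc⟩, fun hd => this.2 ((Nat.dvd_add_self_right).mp hd)⟩
          have := hmax _ hj2
          simp only [id] at this
          omega
        obtain ⟨hx0, hnQ0⟩ := crux x i hjs.1 hjm hxm hQj
        rw [if_pos hYP, mul_one, hx0, zero_add, if_neg hnQ0, mul_zero]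
      · rw [if_neg hQj, mul_zero, add_zero] at hYjs
        exact absurd hYjs (by decide)
    · rw [if_neg hYP, mul_zero]

lemma mul_div_lt {n m : ℕ} (hn : 1 ≤ n) (hm : 2 ≤ m) (hmn : ¬ m ∣ n) : m * (n/m) < n := by
  rcases lt_or_eq_of_le (Nat.mul_div_le n m) with h | h
  · exact h
  · exact absurd ⟨n/m, h.symm⟩ hmn

lemma theta_top_zero {n m : ℕ} (hn : 1 ≤ n) (hm : 2 ≤ m) (hmn : ¬ m ∣ n)
    (x : Fin n → ZMod 2) (i : Fin n) : theta n m (n/m + 1) x i = 0 := by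
  classical
  have hr : n % m ≠ 0 := fun h => hmn (Nat.dvd_of_mod_eq_zero h)
  have hrm : n % m < m := Nat.mod_lt n (by omega)
  have hdm : m * (n/m) + n % m = n := Nat.div_add_mod n m
  have hks : m * (n/m + 1) = n + (m - n % m) := by
    rw [Nat.mul_succ]
    omega
  have hsJ : (m - n % m) ∈ J m (n/m + 1) := by
    rw [mem_J]
    refine ⟨⟨by omega, by omega⟩, ?_⟩
    intro hd
    exact absurd (Nat.le_of_dvd (by omega) hd) (by omega)
  rw [theta_apply]
  rw [← Finset.mul_prod_erase _ _ hsJ]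
  have hxx : x (idx i (m*(n/m + 1))) = x (idx i (m - n % m)) := by rw [hks, idx_addn]
  rw [hxx, ← mul_assoc]
  have hz : x (idx i (m - n % m)) * (x (idx i (m - n % m)) + 1) = 0 := by
    rcases zmod2_em (x (idx i (m - n % m))) with h | h <;> rw [h] <;> decide
  rw [hz, zero_mul]

lemma sum_theta_chi {n m : ℕ} (hn : 1 ≤ n) (hm : 2 ≤ m) (hmn : ¬ m ∣ n)
    (x : Fin n → ZMod 2) (i : Fin n) :
    ∑ k ∈ Finset.range (n/m + 1), theta n m k ((theta n m 0 + theta n m 1) x) i = x i := by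
  rw [Finset.sum_congr rfl (fun k _ => telescope hm x i k)]
  rw [Finset.sum_add_distrib]
  rw [Finset.sum_range_succ' (fun k => theta n m k x i) (n/m),
      Finset.sum_range_succ (fun k => theta n m (k+1) x i) (n/m)]
  rw [theta_top_zero hn hm hmn x i]
  have hg0 : theta n m 0 x i = x i := by simp [theta]
  rw [hg0]
  have hfin : ∀ A b : ZMod 2, (A + b) + (A + 0) = b := by decide
  exact hfin _ _

lemma card_J {m : ℕ} (hm : 2 ≤ m) : ∀ k, (J m k).card = (m-1)*k
  | 0 => by simp [J]
  | (k+1) => by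
    rcases Nat.eq_zero_or_pos k with rfl | hk
    · rw [J_one m hm]
      simp [Nat.card_Ico]
    · have hm0 : 0 < m := by omega
      have hmk1 : 1 ≤ m * k := Nat.mul_pos hm0 hk
      have hsplit : Finset.Ico 1 (m*(k+1)) = Finset.Ico 1 (m*k) ∪ Finset.Ico (m*k) (m*(k+1)) :=
        (Finset.Ico_union_Ico_eq_Ico hmk1 (Nat.mul_le_mul_left m (Nat.le_succ k))).symm
      have hdisj : Disjoint ((Finset.Ico 1 (m*k)).filter (fun j => ¬ m ∣ j))
          ((Finset.Ico (m*k) (m*(k+1))).filter (fun j => ¬ m ∣ j)) := by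
        rw [Finset.disjoint_left]
        intro j hj1 hj2
        rw [Finset.mem_filter, Finset.mem_Ico] at hj1 hj2
        omega
      rw [J, hsplit, Finset.filter_union, Finset.card_union_of_disjoint hdisj, ← J, card_J hm k]
      have hT : (Finset.Ico (m*k) (m*(k+1))).filter (fun j => m ∣ j) = {m*k} := by
        ext j
        simp only [Finset.mem_filter, Finset.mem_Ico, Finset.mem_singleton]
        constructor
        · rintro ⟨⟨h1, h2⟩, q, rfl⟩
          have hq1 : k ≤ q := Nat.le_of_mul_le_mul_left h1 hm0
          have hq2 : q < k + 1 := Nat.lt_of_mul_lt_mul_left h2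
          have : q = k := by omega
          rw [this]
        · rintro rfl
          exact ⟨⟨le_refl _, (Nat.mul_lt_mul_left hm0).mpr (Nat.lt_succ_self k)⟩, ⟨k, rfl⟩⟩
      have hcards := Finset.card_filter_add_card_filter_not
        (s := Finset.Ico (m*k) (m*(k+1))) (fun j => m ∣ j)
      rw [hT, Finset.card_singleton, Nat.card_Ico] at hcards
      have hc2 : m*(k+1) - m*k = m := by rw [Nat.mul_succ]; omega
      rw [hc2] at hcards
      have : ((Finset.Ico (m*k) (m*(k+1))).filter (fun j => ¬ m ∣ j)).card = m - 1 := by omega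
      rw [this, Nat.mul_succ]

noncomputable def poly (n m : ℕ) (i : Fin n) : MvPolynomial (Fin n) (ZMod 2) :=
  ∑ k ∈ Finset.range (n/m + 1),
    (MvPolynomial.X (idx i (m*k)) * ∏ j ∈ J m k, (MvPolynomial.X (idx i j) + 1))

lemma eval_poly {n m : ℕ} (x : Fin n → ZMod 2) (i : Fin n) :
    MvPolynomial.eval x (poly n m i) = ∑ k ∈ Finset.range (n/m + 1), theta n m k x i := by
  rw [poly, map_sum]
  apply Finset.sum_congr rfl
  intro k _
  rw [theta_apply, map_mul, MvPolynomial.eval_X, map_prod]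
  congr 1
  apply Finset.prod_congr rfl
  intro j _
  rw [map_add, MvPolynomial.eval_X, map_one]

lemma totalDegree_poly {n m : ℕ} (hm : 2 ≤ m) (i : Fin n) :
    (poly n m i).totalDegree ≤ (m-1)*(n/m) + 1 := by
  refine le_trans (MvPolynomial.totalDegree_finset_sum _ _) ?_
  apply Finset.sup_le
  intro k hk
  rw [Finset.mem_range] at hk
  refine le_trans (MvPolynomial.totalDegree_mul _ _) ?_
  have h1 : (MvPolynomial.X (idx i (m*k)) : MvPolynomial (Fin n) (ZMod 2)).totalDegree = 1 :=
    MvPolynomial.totalDegree_X _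
  have h2 : (∏ j ∈ J m k, (MvPolynomial.X (idx i j) + (1:MvPolynomial (Fin n) (ZMod 2)))).totalDegree
      ≤ (m-1)*(n/m) := by
    refine le_trans (MvPolynomial.totalDegree_finset_prod _ _) ?_
    refine le_trans (Finset.sum_le_sum (g := fun _ => 1) ?_) ?_
    · intro j _
      refine le_trans (MvPolynomial.totalDegree_add _ _) ?_
      simp [MvPolynomial.totalDegree_X, MvPolynomial.totalDegree_one]
    · rw [Finset.sum_const, smul_eq_mul, mul_one, card_J hm]
      exact Nat.mul_le_mul_left _ (by omega)
  omega

lemma cube_sum_zero {N : ℕ} (T : Finset (Fin N)) (q : MvPolynomial (Fin N) (ZMod 2))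
    (hq : q.totalDegree < T.card) :
    ∑ x ∈ Fintype.piFinset (fun v => if v ∈ T then (Finset.univ : Finset (ZMod 2)) else {0}),
      MvPolynomial.eval x q = 0 := by
  classical
  rw [Finset.sum_congr rfl (fun x _ => MvPolynomial.eval_eq' x q)]
  rw [Finset.sum_comm]
  apply Finset.sum_eq_zero
  intro d hd
  rw [← Finset.mul_sum, ← Finset.prod_univ_sum (fun v => if v ∈ T then (Finset.univ : Finset (ZMod 2)) else {0}) (fun v a => a ^ d v)]
  have hex : ∃ v0 ∈ T, d v0 = 0 := by
    by_contra hc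
    push_neg at hc
    have h1 : T.card ≤ ∑ v ∈ T, d v := by
      calc T.card = ∑ _v ∈ T, 1 := by simp
      _ ≤ ∑ v ∈ T, d v := Finset.sum_le_sum (fun v hv => Nat.one_le_iff_ne_zero.mpr (hc v hv))
    have h2 : ∑ v ∈ T, d v ≤ ∑ v ∈ Finset.univ, d v :=
      Finset.sum_le_sum_of_subset (Finset.subset_univ T)
    have h3 : ∑ v ∈ (Finset.univ : Finset (Fin N)), d v = d.sum (fun _ e => e) := by
      rw [Finsupp.sum]
      exact (Finset.sum_subset (Finset.subset_univ _)
        (fun v _ hv => Finsupp.notMem_support_iff.mp hv)).symm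
    have h4 := MvPolynomial.le_totalDegree hd
    omega
  obtain ⟨v0, hv0T, hv00⟩ := hex
  have hz : (∑ a ∈ (if v0 ∈ T then (Finset.univ : Finset (ZMod 2)) else {0}), a ^ d v0) = 0 := by
    rw [if_pos hv0T, hv00]
    decide
  rw [Finset.prod_eq_zero (Finset.mem_univ v0) hz, mul_zero]

lemma theta_as_prod {n m : ℕ} (x : Fin n → ZMod 2) (i : Fin n) (k : ℕ)
    (hkn : m * k < n) :
    theta n m k x i
      = ∏ v : Fin n, (if v = idx i (m*k) then x v
          else if v ∈ (J m k).image (idx i) then x v + 1 else 1) := by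
  classical
  have hJb : ∀ j ∈ J m k, j < n := fun j hj => lt_trans (mem_J.mp hj).1.2 hkn
  have hinj : ∀ a ∈ J m k, ∀ b ∈ J m k, idx i a = idx i b → a = b :=
    fun a ha b hb hab => idx_inj i (hJb a ha) (hJb b hb) hab
  have hnotmem : idx i (m*k) ∉ (J m k).image (idx i) := by
    intro hmem
    rw [Finset.mem_image] at hmem
    obtain ⟨j, hj, hj2⟩ := hmem
    have he := idx_inj i (hJb j hj) hkn hj2
    exact (mem_J.mp hj).2 (he ▸ (⟨k, rfl⟩ : m ∣ m*k))
  have h1 : ∀ v ∈ Finset.univ, v ∉ insert (idx i (m*k)) ((J m k).image (idx i)) →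
      (if v = idx i (m*k) then x v else if v ∈ (J m k).image (idx i) then x v + 1 else 1) = 1 := by
    intro v _ hv
    rw [Finset.mem_insert] at hv
    push_neg at hv
    rw [if_neg hv.1, if_neg hv.2]
  rw [theta_apply, ← Finset.prod_subset (Finset.subset_univ _) h1, Finset.prod_insert hnotmem,
    if_pos rfl, Finset.prod_image hinj]
  congr 1
  apply Finset.prod_congr rfl
  intro j hj
  have hne : idx i j ≠ idx i (m*k) := by
    intro he
    exact (mem_J.mp hj).2 ((idx_inj i (hJb j hj) hkn he) ▸ (⟨k, rfl⟩ : m ∣ m*k))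
  rw [if_neg hne, if_pos (Finset.mem_image_of_mem _ hj)]

lemma cube_sum_G {n m : ℕ} (hn : 1 ≤ n) (hm : 2 ≤ m) (hmn : ¬ m ∣ n) (i : Fin n) :
    ∑ x ∈ Fintype.piFinset (fun v =>
        if v ∈ (insert (m*(n/m)) (J m (n/m))).image (idx i)
        then (Finset.univ : Finset (ZMod 2)) else {0}),
      (∑ k ∈ Finset.range (n/m + 1), theta n m k x i) = 1 := by
  classical
  have hml : m * (n/m) < n := mul_div_lt hn hm hmn
  have hSb : ∀ j ∈ insert (m*(n/m)) (J m (n/m)), j < n := by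
    intro j hj
    rw [Finset.mem_insert] at hj
    rcases hj with rfl | hj
    · exact hml
    · exact lt_trans (mem_J.mp hj).1.2 hml
  rw [Finset.sum_comm]
  have hterm : ∀ k ∈ Finset.range (n/m + 1),
      (∑ x ∈ Fintype.piFinset (fun v =>
        if v ∈ (insert (m*(n/m)) (J m (n/m))).image (idx i)
        then (Finset.univ : Finset (ZMod 2)) else {0}), theta n m k x i)
      = if k = n/m then 1 else 0 := by
    intro k hk
    rw [Finset.mem_range] at hk
    have hkl : k ≤ n/m := by omega
    have hkn : m * k < n := lt_of_le_of_lt (Nat.mul_le_mul_left m hkl) hml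
    rw [Finset.sum_congr rfl (fun x _ => theta_as_prod x i k hkn)]
    rw [← Finset.prod_univ_sum
      (fun v => if v ∈ (insert (m*(n/m)) (J m (n/m))).image (idx i)
        then (Finset.univ : Finset (ZMod 2)) else {0})
      (fun v a => if v = idx i (m*k) then a
          else if v ∈ (J m k).image (idx i) then a + 1 else 1)]
    by_cases hkeq : k = n/m
    · rw [if_pos hkeq]
      apply Finset.prod_eq_one
      intro v _
      by_cases h1 : v = idx i (m*k)
      · have hvT : v ∈ (insert (m*(n/m)) (J m (n/m))).image (idx i) := by
          rw [h1, hkeq]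
          exact Finset.mem_image_of_mem _ (Finset.mem_insert_self _ _)
        rw [if_pos hvT]
        rw [Finset.sum_congr rfl (fun a _ => if_pos h1)]
        decide
      · by_cases h2 : v ∈ (J m k).image (idx i)
        · have hvT : v ∈ (insert (m*(n/m)) (J m (n/m))).image (idx i) := by
            rw [← hkeq]
            exact Finset.image_subset_image (Finset.subset_insert _ _) h2
          rw [if_pos hvT]
          rw [Finset.sum_congr rfl (fun a _ => by rw [if_neg h1, if_pos h2])]
          decide
        · have hvT : v ∉ (insert (m*(n/m)) (J m (n/m))).image (idx i) := by
            rw [Finset.image_insert, Finset.mem_insert, ← hkeq]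
            push_neg
            exact ⟨h1, h2⟩
          rw [if_neg hvT, Finset.sum_singleton, if_neg h1, if_neg h2]
    · rw [if_neg hkeq]
      have hv0 : idx i (m*k) ∉ (insert (m*(n/m)) (J m (n/m))).image (idx i) := by
        intro hmem
        rw [Finset.mem_image] at hmem
        obtain ⟨j, hj, hj2⟩ := hmem
        have hje : m*k = j := idx_inj i hkn (hSb j hj) hj2.symm
        rw [Finset.mem_insert] at hj
        rcases hj with hj | hj
        · rw [hj] at hje
          exact hkeq (Nat.eq_of_mul_eq_mul_left (by omega) hje)
        · exact (mem_J.mp hj).2 (hje ▸ (⟨k, rfl⟩ : m ∣ m*k))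
      apply Finset.prod_eq_zero (Finset.mem_univ (idx i (m*k)))
      rw [if_neg hv0, Finset.sum_singleton, if_pos rfl]
  rw [Finset.sum_congr rfl hterm]
  rw [Finset.sum_ite_eq' (Finset.range (n/m + 1)) (n/m) (fun _ => (1 : ZMod 2))]
  rw [if_pos (Finset.mem_range.mpr (Nat.lt_succ_self _))]

lemma card_T {n m : ℕ} (hn : 1 ≤ n) (hm : 2 ≤ m) (hmn : ¬ m ∣ n) (i : Fin n) :
    ((insert (m*(n/m)) (J m (n/m))).image (idx i)).card = (m-1)*(n/m) + 1 := by
  have hml : m * (n/m) < n := mul_div_lt hn hm hmn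
  have hSb : ∀ j ∈ insert (m*(n/m)) (J m (n/m)), j < n := by
    intro j hj
    rw [Finset.mem_insert] at hj
    rcases hj with rfl | hj
    · exact hml
    · exact lt_trans (mem_J.mp hj).1.2 hml
  rw [Finset.card_image_of_injOn
    (fun a ha b hb hab => idx_inj i (hSb a ha) (hSb b hb) hab)]
  rw [Finset.card_insert_of_notMem (fun hmem => (mem_J.mp hmem).2 ⟨n/m, rfl⟩)]
  rw [card_J hm]

lemma algDeg_G {n m : ℕ} (hn : 1 ≤ n) (hm : 2 ≤ m) (hmn : ¬ m ∣ n) (i : Fin n) :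
    algDeg (fun x => ∑ k ∈ Finset.range (n/m + 1), theta n m k x i) = (m-1)*(n/m) + 1 := by
  classical
  have hmem : ((m-1)*(n/m) + 1) ∈ {d | ∃ p : MvPolynomial (Fin n) (ZMod 2),
      p.totalDegree ≤ d ∧
        ∀ x, MvPolynomial.eval x p = ∑ k ∈ Finset.range (n/m + 1), theta n m k x i} :=
    ⟨poly n m i, totalDegree_poly hm i, fun x => eval_poly x i⟩
  apply le_antisymm
  · exact Nat.sInf_le hmem
  · apply le_csInf ⟨_, hmem⟩
    rintro d ⟨p, hdeg, heval⟩
    by_contra hlt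
    push_neg at hlt
    have hdc : p.totalDegree < ((insert (m*(n/m)) (J m (n/m))).image (idx i)).card := by
      rw [card_T hn hm hmn i]
      omega
    have h0 := cube_sum_zero ((insert (m*(n/m)) (J m (n/m))).image (idx i)) p hdc
    rw [Finset.sum_congr rfl (fun x _ => heval x)] at h0
    rw [cube_sum_G hn hm hmn i] at h0
    exact absurd h0 (by decide)

end S15

theorem stmt15 (n m : ℕ) (hn : 1 ≤ n) (hm : 2 ≤ m) (hmn : ¬ m ∣ n) :
    (∃ g : (Fin n → ZMod 2) → Fin n → ZMod 2,
      (theta n m 0 + theta n m 1) ∘ g = id ∧ g ∘ (theta n m 0 + theta n m 1) = id) ∧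
    (∀ g : (Fin n → ZMod 2) → Fin n → ZMod 2,
      (theta n m 0 + theta n m 1) ∘ g = id → g ∘ (theta n m 0 + theta n m 1) = id →
        mapDeg g = (m - 1) * (n / m) + 1) := by
  classical
  set G : (Fin n → ZMod 2) → Fin n → ZMod 2 :=
    fun x i => ∑ k ∈ Finset.range (n/m + 1), theta n m k x i with hGdef
  have hGchi : G ∘ (theta n m 0 + theta n m 1) = id := by
    funext x
    funext i
    show G ((theta n m 0 + theta n m 1) x) i = x i
    rw [hGdef]
    exact S15.sum_theta_chi hn hm hmn x i
  have hinj : Function.Injective (theta n m 0 + theta n m 1 :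
      (Fin n → ZMod 2) → Fin n → ZMod 2) := by
    intro a b hab
    have ha := congrFun hGchi a
    have hb := congrFun hGchi b
    simp only [Function.comp_apply, id_eq] at ha hb
    rw [← ha, ← hb, hab]
  have hsurj : Function.Surjective (theta n m 0 + theta n m 1 :
      (Fin n → ZMod 2) → Fin n → ZMod 2) := Finite.surjective_of_injective hinj
  have hchiG : (theta n m 0 + theta n m 1) ∘ G = id := by
    funext y
    obtain ⟨x, rfl⟩ := hsurj y
    have h1 := congrFun hGchi x
    simp only [Function.comp_apply, id_eq] at h1 ⊢
    rw [h1]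
  refine ⟨⟨G, hchiG, hGchi⟩, ?_⟩
  intro g h1 h2
  have hgG : g = G := by
    funext y
    have e1 : (theta n m 0 + theta n m 1) (G y) = y := congrFun hchiG y
    have e2 := congrFun h2 (G y)
    simp only [Function.comp_apply, id_eq] at e2
    rw [e1] at e2
    exact e2
  rw [hgG, mapDeg]
  have hi : ∀ i : Fin n, (algDeg fun x => G x i) = (m-1)*(n/m) + 1 := by
    intro i
    rw [hGdef]
    exact S15.algDeg_G hn hm hmn i
  apply le_antisymm
  · exact Finset.sup_le (fun i _ => le_of_eq (hi i))
  · exact le_trans (le_of_eq (hi ⟨0, hn⟩).symm)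
      (Finset.le_sup (f := fun i => algDeg fun x => G x i) (Finset.mem_univ (⟨0, hn⟩ : Fin n)))
end

section
/- For every integer k ≥ 1, the k-fold compositional iterate of χ_{n,m} satisfies χ_{n,m}^k = Σ_{j=0}^{min(k,ℓ)} a_j θ_{m,j}, where a_j ∈ F_2 equals 1 if and only if the binomial coefficient C(k, j) is odd (equivalently, if and only if every base-2 digit of j is at most the corresponding base-2 digit of k). -/
namespace Stmt16Aux

lemma zz (z : ZMod 2) : z * (z + 1) = 0 := by revert z; decide

lemma idx_idx {n : ℕ} (i : Fin n) (s t : ℕ) : idx (idx i s) t = idx i (s + t) := by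
  unfold idx
  apply Fin.ext
  simp [Nat.mod_add_mod, Nat.add_assoc]

lemma idx_congr {n : ℕ} (i : Fin n) {s t : ℕ} (h : s = t) : idx i s = idx i t := by rw [h]

lemma idx_add_n {n : ℕ} (i : Fin n) (s : ℕ) : idx i (s + n) = idx i s := by
  unfold idx
  apply Fin.ext
  simp [← Nat.add_assoc, Nat.add_mod_right]

/-- the product `∏_{0 ≤ s < N, m ∤ s} (x_{i+s} + 1)` in `if` form. -/
def pp (n m : ℕ) (x : Fin n → ZMod 2) (i : Fin n) (N : ℕ) : ZMod 2 :=
  ∏ s ∈ Finset.range N, if m ∣ s then 1 else (x (idx i s) + 1)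

lemma theta_eq (n m k : ℕ) (hk : k ≠ 0) (x : Fin n → ZMod 2) (i : Fin n) :
    theta n m k x i = x (idx i (m * k)) * pp n m x i (m * k) := by
  unfold theta pp
  rw [if_neg hk]
  congr 1
  rw [Finset.prod_filter]
  have h1 : (∏ s ∈ Finset.Ico 1 (m * k), if ¬ m ∣ s then (x (idx i s) + 1) else 1)
      = ∏ s ∈ Finset.range (m * k), if ¬ m ∣ s then (x (idx i s) + 1) else 1 := by
    apply Finset.prod_subset
    · exact fun s hs => Finset.mem_range.mpr (Finset.mem_Ico.mp hs).2
    · intro s hs hns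
      have : s = 0 := by
        simp only [Finset.mem_Ico, Finset.mem_range, not_and, not_lt] at hs hns
        omega
      simp [this]
  rw [h1]
  exact Finset.prod_congr rfl fun s _ => by by_cases h : m ∣ s <;> simp [h]

lemma pp_add (n m : ℕ) (x : Fin n → ZMod 2) (i : Fin n) (A B : ℕ) (hA : m ∣ A) :
    pp n m x i (A + B) = pp n m x i A * pp n m x (idx i A) B := by
  unfold pp
  rw [Finset.prod_range_add]
  congr 1
  refine Finset.prod_congr rfl fun s _ => ?_
  rw [idx_idx]
  by_cases h : m ∣ s
  · simp [h, (Nat.dvd_add_right hA).mpr h]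
  · have : ¬ m ∣ (A + s) := fun hc => h ((Nat.dvd_add_right hA).mp hc)
    simp [h, this]

lemma pp_factor (n m : ℕ) (x : Fin n → ZMod 2) (i : Fin n) (N v : ℕ) (hv : v < N)
    (hmv : ¬ m ∣ v) (q : Fin n) (hq : idx i v = q) :
    ∃ R, pp n m x i N = (x q + 1) * R := by
  refine ⟨∏ s ∈ (Finset.range N).erase v, if m ∣ s then 1 else (x (idx i s) + 1), ?_⟩
  unfold pp
  rw [← Finset.mul_prod_erase _ _ (Finset.mem_range.mpr hv), if_neg hmv, hq]

lemma chi_apply (n m : ℕ) (x : Fin n → ZMod 2) (p : Fin n) :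
    (theta n m 0 + theta n m 1) x p = x p + x (idx p m) * pp n m x p m := by
  have h1 := theta_eq n m 1 one_ne_zero x p
  have h0 : theta n m 0 = id := if_pos rfl
  show theta n m 0 x p + theta n m 1 x p = _
  rw [h0, h1]
  simp

lemma mul_prod_congr {ι : Type*} (S : Finset ι) (e : ZMod 2) (f g : ι → ZMod 2)
    (h : ∀ s ∈ S, e * f s = e * g s) : e * ∏ s ∈ S, f s = e * ∏ s ∈ S, g s := by
  classical
  induction S using Finset.induction with
  | empty => rfl
  | @insert a S ha ih =>
    rw [Finset.prod_insert ha, Finset.prod_insert ha]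
    have ih' := ih fun s hs => h s (Finset.mem_insert_of_mem hs)
    have ha' := h a (Finset.mem_insert_self _ _)
    calc e * (f a * ∏ s ∈ S, f s) = f a * (e * ∏ s ∈ S, f s) := by ring
    _ = f a * (e * ∏ s ∈ S, g s) := by rw [ih']
    _ = (e * f a) * ∏ s ∈ S, g s := by ring
    _ = (e * g a) * ∏ s ∈ S, g s := by rw [ha']
    _ = e * (g a * ∏ s ∈ S, g s) := by ring

lemma not_dvd_sub {m s : ℕ} (hm : 2 ≤ m) (h1 : 1 ≤ s) (h2 : s < m) : ¬ m ∣ (m - s) := by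
  intro hd
  have := Nat.le_of_dvd (by omega) hd
  omega

lemma lemC (n m : ℕ) (hm : 2 ≤ m) (x y : Fin n → ZMod 2)
    (hy : ∀ p, y p = x p + x (idx p m) * pp n m x p m) :
    ∀ j, 1 ≤ j → ∀ i : Fin n,
      y (idx i (m * j)) * pp n m y i (m * j) = y (idx i (m * j)) * pp n m x i (m * j) := by
  intro j hj
  induction j, hj using Nat.le_induction with
  | base =>
    intro i
    simp only [mul_one]
    unfold pp
    apply mul_prod_congr
    intro s hs
    by_cases hms : m ∣ s
    · simp [hms]
    · have hs' : s < m := Finset.mem_range.mp hs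
      have hs1 : 1 ≤ s := Nat.pos_of_ne_zero fun h => hms (h ▸ dvd_zero m)
      simp only [if_neg hms]
      rw [hy (idx i s)]
      have hzero : y (idx i m) * (x (idx (idx i s) m) * pp n m x (idx i s) m) = 0 := by
        obtain ⟨R1, h1⟩ := pp_factor n m x (idx i s) m (m - s) (by omega)
          (not_dvd_sub hm hs1 hs') (idx i m) (by rw [idx_idx]; exact idx_congr i (by omega))
        obtain ⟨R2, h2⟩ := pp_factor n m x (idx i m) m s hs' hms (idx (idx i s) m)
          (by rw [idx_idx, idx_idx]; exact idx_congr i (by omega))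
        rw [hy (idx i m), h1, h2]
        linear_combination (x (idx (idx i s) m) * R1) * zz (x (idx i m)) +
          (x (idx (idx i m) m) * R2 * (x (idx i m) + 1) * R1) * zz (x (idx (idx i s) m))
      linear_combination hzero
  | succ j hj ih =>
    intro i
    have e1 : m * (j + 1) = m + m * j := by ring
    rw [e1, pp_add n m y i m (m * j) dvd_rfl, pp_add n m x i m (m * j) dvd_rfl,
      ← idx_idx i m (m * j)]
    have key : pp n m x (idx i m) (m * j) * pp n m y i m
        = pp n m x (idx i m) (m * j) * pp n m x i m := by
      unfold pp
      apply mul_prod_congr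
      intro s hs
      by_cases hms : m ∣ s
      · simp [hms]
      · have hs' : s < m := Finset.mem_range.mp hs
        simp only [if_neg hms]
        rw [hy (idx i s)]
        have hzero : (∏ s ∈ Finset.range (m * j), if m ∣ s then 1
              else (x (idx (idx i m) s) + 1)) *
            (x (idx (idx i s) m) * pp n m x (idx i s) m) = 0 := by
          obtain ⟨R, hR⟩ := pp_factor n m x (idx i m) (m * j) s
            (lt_of_lt_of_le hs' (Nat.le_mul_of_pos_right m (by omega))) hms
            (idx (idx i s) m) (by rw [idx_idx, idx_idx]; exact idx_congr i (by omega))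
          unfold pp at hR
          rw [hR]
          linear_combination (R * pp n m x (idx i s) m) * zz (x (idx (idx i s) m))
        linear_combination hzero
    have ih' := ih (idx i m)
    linear_combination pp n m y i m * ih' + y (idx (idx i m) (m * j)) * key

lemma lemB (n m : ℕ) (hm : 2 ≤ m) (j : ℕ) (x : Fin n → ZMod 2) (i : Fin n) :
    theta n m j ((theta n m 0 + theta n m 1) x) i
      = theta n m j x i + theta n m (j + 1) x i := by
  set y := (theta n m 0 + theta n m 1) x with hydef
  have hy : ∀ p, y p = x p + x (idx p m) * pp n m x p m := fun p => chi_apply n m x p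
  rcases Nat.eq_zero_or_pos j with hj | hj
  · subst hj
    have h0 : theta n m 0 = id := if_pos rfl
    show theta n m 0 y i = theta n m 0 x i + theta n m 1 x i
    rw [h0, theta_eq n m 1 one_ne_zero]
    show y i = x i + _
    rw [hy i]
    simp
  · have hj' : j ≠ 0 := by omega
    rw [theta_eq n m j hj' y i, lemC n m hm x y hy j hj i, hy (idx i (m * j)),
      theta_eq n m j hj' x i, theta_eq n m (j + 1) (Nat.succ_ne_zero j) x i]
    have e2 : m * (j + 1) = m * j + m := by ring
    rw [e2, pp_add n m x i (m * j) m (dvd_mul_right m j), ← idx_idx i (m * j) m]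
    ring

lemma lemA (n m : ℕ) (hn : 1 ≤ n) (hmn : ¬ m ∣ n) (j : ℕ) (hj : n < m * j)
    (x : Fin n → ZMod 2) (i : Fin n) : theta n m j x i = 0 := by
  have hj0 : j ≠ 0 := by rintro rfl; omega
  rw [theta_eq n m j hj0 x i]
  have hmv : ¬ m ∣ (m * j - n) := by
    intro hd
    exact hmn (by
      have h2 : m ∣ (m * j - (m * j - n)) := Nat.dvd_sub (dvd_mul_right m j) hd
      rwa [show m * j - (m * j - n) = n by omega] at h2)
  obtain ⟨R, hR⟩ := pp_factor n m x i (m * j) (m * j - n) (by omega) hmv (idx i (m * j))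
    (by rw [← idx_add_n i (m * j - n)]; exact idx_congr i (by omega))
  rw [hR]
  linear_combination R * zz (x (idx i (m * j)))

lemma pascal (t : ℕ → ZMod 2) (k : ℕ) :
    ∑ j ∈ Finset.range (k + 1), (Nat.choose k j : ZMod 2) * (t j + t (j + 1)) =
    ∑ j ∈ Finset.range (k + 2), (Nat.choose (k + 1) j : ZMod 2) * t j := by
  have A := Finset.sum_range_succ' (fun j => (Nat.choose k j : ZMod 2) * t j) (k + 1)
  have B := Finset.sum_range_succ (fun j => (Nat.choose k j : ZMod 2) * t j) (k + 1)
  rw [Finset.sum_range_succ' (fun j => (Nat.choose (k + 1) j : ZMod 2) * t j) (k + 1)]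
  simp only [Nat.choose_succ_self, Nat.cast_zero, zero_mul, add_zero, Nat.choose_zero_right,
    Nat.cast_one, one_mul] at A B ⊢
  have hL : ∑ j ∈ Finset.range (k + 1), (Nat.choose k j : ZMod 2) * (t j + t (j + 1))
      = (∑ j ∈ Finset.range (k + 1), (Nat.choose k j : ZMod 2) * t j)
        + ∑ j ∈ Finset.range (k + 1), (Nat.choose k j : ZMod 2) * t (j + 1) := by
    rw [← Finset.sum_add_distrib]
    exact Finset.sum_congr rfl fun j _ => by ring
  have hR : ∑ j ∈ Finset.range (k + 1), (Nat.choose (k + 1) (j + 1) : ZMod 2) * t (j + 1)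
      = (∑ j ∈ Finset.range (k + 1), (Nat.choose k j : ZMod 2) * t (j + 1))
        + ∑ j ∈ Finset.range (k + 1), (Nat.choose k (j + 1) : ZMod 2) * t (j + 1) := by
    rw [← Finset.sum_add_distrib]
    exact Finset.sum_congr rfl fun j _ => by rw [Nat.choose_succ_succ]; push_cast; ring
  rw [hL, hR]
  linear_combination A - B

lemma iter_eq (n m : ℕ) (hm : 2 ≤ m) (k : ℕ) (x : Fin n → ZMod 2) (i : Fin n) :
    (theta n m 0 + theta n m 1)^[k] x i
      = ∑ j ∈ Finset.range (k + 1), (Nat.choose k j : ZMod 2) * theta n m j x i := by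
  induction k generalizing x i with
  | zero => simp [theta]
  | succ k ih =>
    rw [Function.iterate_succ_apply, ih]
    calc ∑ j ∈ Finset.range (k + 1),
          (Nat.choose k j : ZMod 2) * theta n m j ((theta n m 0 + theta n m 1) x) i
        = ∑ j ∈ Finset.range (k + 1),
          (Nat.choose k j : ZMod 2) * (theta n m j x i + theta n m (j + 1) x i) :=
          Finset.sum_congr rfl fun j _ => by rw [lemB n m hm j x i]
      _ = ∑ j ∈ Finset.range (k + 2), (Nat.choose (k + 1) j : ZMod 2) * theta n m j x i :=
          pascal (fun j => theta n m j x i) k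

end Stmt16Aux

open Stmt16Aux in
theorem stmt16 (n m : ℕ) (hn : 1 ≤ n) (hm : 2 ≤ m) (hmn : ¬ m ∣ n)
    (k : ℕ) (hk : 1 ≤ k) :
    (theta n m 0 + theta n m 1)^[k] =
      ∑ j ∈ Finset.range (min k (n / m) + 1),
        ((Nat.choose k j : ZMod 2)) • theta n m j := by
  funext x i
  rw [iter_eq n m hm k x i]
  have hsub : Finset.range (min k (n / m) + 1) ⊆ Finset.range (k + 1) :=
    Finset.range_subset_range.mpr (by omega)
  have hzero : ∀ j ∈ Finset.range (k + 1), j ∉ Finset.range (min k (n / m) + 1) →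
      (Nat.choose k j : ZMod 2) * theta n m j x i = 0 := by
    intro j hj hnj
    simp only [Finset.mem_range] at hj hnj
    have hjl : n / m + 1 ≤ j := by omega
    have hlt : n < m * j := by
      have h1 := Nat.mul_le_mul_left m hjl
      have h2 := Nat.div_add_mod n m
      have h3 := Nat.mod_lt n (show 0 < m by omega)
      have h4 : m * (n / m + 1) = m * (n / m) + m := by ring
      omega
    rw [lemA n m hn hmn j hlt x i, mul_zero]
  rw [← Finset.sum_subset hsub hzero]
  simp [Finset.sum_apply, Pi.smul_apply, smul_eq_mul]
end

section
/- Let j ≥ 0 be an integer with 2^j ≤ ℓ. Then x ∈ F_2^n is a fixed point of the 2^j-fold iterate of χ_{n,m} (i.e., χ_{n,m}^{2^j}(x) = x) if and only if θ_{m,2^j}(x) = 0, which holds if and only if for every index i ∈ {0, 1, …, n−1} it is not the case that x_{i+2^j·m} = 1 and x_{i+t} = 0 for all t with 1 ≤ t ≤ 2^j·m − 1 and m ∤ t (indices mod n); equivalently, x contains no cyclic substring of the form (0_{m−1}, *, 0_{m−1}, *, …, 0_{m−1}, 1) of length 2^j·m, where * is an arbitrary bit and 0_{m−1} denotes m−1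 consecutive zero bits. -/
namespace Stmt17Aux

lemma idx_idx {n : ℕ} (i : Fin n) (a b : ℕ) : idx (idx i a) b = idx i (a + b) := by
  simp only [idx, Fin.mk.injEq]
  rw [Nat.mod_add_mod, Nat.add_assoc]

lemma two01 (u : ZMod 2) : u = 0 ∨ u = 1 := by revert u; decide

lemma mul_eq_one2 {u v : ZMod 2} (h : u * v = 1) : u = 1 ∧ v = 1 := by
  revert h; revert u v; decide

lemma eq_one_of_add_one : ∀ u : ZMod 2, u + 1 = 0 → u = 1 := by decide

lemma one_add_add_one : ∀ u : ZMod 2, 1 + u + 1 = u := by decide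

/-- The index set. -/
def A (m a : ℕ) : Finset ℕ := (Finset.Ico 1 a).filter (fun j => ¬ m ∣ j)

/-- The product factor. -/
def P {n : ℕ} (m a : ℕ) (x : Fin n → ZMod 2) (i : Fin n) : ZMod 2 :=
  ∏ j ∈ A m a, (x (idx i j) + 1)

lemma theta_apply {n m k : ℕ} (hk : k ≠ 0) (x : Fin n → ZMod 2) (i : Fin n) :
    theta n m k x i = x (idx i (m * k)) * P m (m * k) x i := by
  simp [theta, hk, P, A]

lemma mem_A {m a j : ℕ} : j ∈ A m a ↔ 1 ≤ j ∧ j < a ∧ ¬ m ∣ j := by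
  simp [A, Finset.mem_filter, Finset.mem_Ico, and_assoc]

lemma P_eq_zero {n : ℕ} {m a : ℕ} {x : Fin n → ZMod 2} {i : Fin n} {j : ℕ}
    (hj : j ∈ A m a) (hx : x (idx i j) = 1) : P m a x i = 0 := by
  apply Finset.prod_eq_zero hj
  rw [hx]; decide

lemma P_vals {n : ℕ} {m a : ℕ} {x : Fin n → ZMod 2} {i : Fin n}
    (h : P m a x i ≠ 0) : ∀ j ∈ A m a, x (idx i j) = 0 := by
  intro j hj
  rcases two01 (x (idx i j)) with h0 | h1
  · exact h0
  · exact absurd (P_eq_zero hj h1) h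

lemma P_eq_one {n : ℕ} {m a : ℕ} {x : Fin n → ZMod 2} {i : Fin n}
    (h : ∀ j ∈ A m a, x (idx i j) = 0) : P m a x i = 1 := by
  apply Finset.prod_eq_one
  intro j hj
  rw [h j hj]; decide

/-- Splitting of the product over a doubled window. -/
lemma P_split {n : ℕ} {m k : ℕ} (hm : m ≠ 0) (hk : k ≠ 0) (x : Fin n → ZMod 2) (i : Fin n) :
    P m (m * (2 * k)) x i = P m (m * k) x i * P m (m * k) x (idx i (m * k)) := by
  have ha1 : 1 ≤ m * k := Nat.one_le_iff_ne_zero.mpr (by positivity)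
  have hma : m ∣ m * k := ⟨k, rfl⟩
  have h2a : m * (2 * k) = m * k + m * k := by ring
  rw [h2a]
  unfold P A
  have hsplit : Finset.Ico 1 (m * k + m * k)
      = Finset.Ico 1 (m * k) ∪ Finset.Ico (m * k) (m * k + m * k) :=
    (Finset.Ico_union_Ico_eq_Ico ha1 (by omega)).symm
  rw [hsplit, Finset.filter_union, Finset.prod_union]
  · congr 1
    refine Eq.symm (Finset.prod_bij (fun j _ => m * k + j) ?_ ?_ ?_ ?_)
    · intro j hj
      simp only [Finset.mem_filter, Finset.mem_Ico] at hj ⊢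
      refine ⟨⟨by omega, by omega⟩, ?_⟩
      intro hd
      exact hj.2 ((Nat.dvd_add_right hma).mp hd)
    · intro j₁ h₁ j₂ h₂ h
      have h' : m * k + j₁ = m * k + j₂ := h
      omega
    · intro j hj
      simp only [Finset.mem_filter, Finset.mem_Ico] at hj
      have hjne : j ≠ m * k := by
        rintro rfl
        exact hj.2 hma
      refine ⟨j - m * k, ?_, show m * k + (j - m * k) = j by omega⟩
      simp only [Finset.mem_filter, Finset.mem_Ico]
      refine ⟨⟨by omega, by omega⟩, ?_⟩
      intro hd
      apply hj.2
      have : m ∣ m * k + (j - m * k) := (Nat.dvd_add_right hma).mpr hd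
      rwa [Nat.add_sub_cancel' (by omega : m * k ≤ j)] at this
    · intro j hj
      rw [idx_idx]
  · apply Finset.disjoint_filter_filter
    exact Finset.Ico_disjoint_Ico_consecutive 1 (m * k) (m * k + m * k)

/-- Complement within the window. -/
lemma compl_mem_A {m a j : ℕ} (hma : m ∣ a) (hj : j ∈ A m a) : a - j ∈ A m a := by
  rw [mem_A] at hj ⊢
  obtain ⟨h1, h2, h3⟩ := hj
  refine ⟨by omega, by omega, ?_⟩
  intro hd
  apply h3
  have : m ∣ (a - j) + j := by
    rw [Nat.sub_add_cancel (le_of_lt h2)]; exact hma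
  exact (Nat.dvd_add_right hd).mp this

/-- The key doubling identity. -/
lemma doubling {n m : ℕ} (k : ℕ) (hm : m ≠ 0) (hk : k ≠ 0) (x : Fin n → ZMod 2) (i : Fin n) :
    theta n m k (x + theta n m k x) i = theta n m k x i + theta n m (2 * k) x i := by
  have hma : m ∣ m * k := ⟨k, rfl⟩
  have hy : ∀ p : Fin n, (x + theta n m k x) p
      = x p + x (idx p (m * k)) * P m (m * k) x p := by
    intro p
    rw [Pi.add_apply, theta_apply hk]
  rw [theta_apply hk, theta_apply hk, theta_apply (by positivity : 2 * k ≠ 0),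
    P_split hm hk, show m * (2 * k) = m * k + m * k by ring, ← idx_idx i (m * k) (m * k)]
  by_cases hcase : ∃ j ∈ A m (m * k), x (idx i j) = 1
  · -- P m (m*k) x i = 0, RHS = 0
    obtain ⟨j0, hj0, hxj0⟩ := hcase
    have hj0' := mem_A.mp hj0
    have hPi : P m (m * k) x i = 0 := P_eq_zero hj0 hxj0
    rw [hPi]
    simp only [mul_zero, zero_mul, add_zero]
    have hfac : (x + theta n m k x) (idx i j0) + 1
        = x (idx (idx i j0) (m * k)) * P m (m * k) x (idx i j0) := by
      rw [hy, hxj0]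
      exact one_add_add_one _
    rcases two01 (x (idx (idx i j0) (m * k)) * P m (m * k) x (idx i j0)) with hc | hc
    · have hQ : P m (m * k) (x + theta n m k x) i = 0 :=
        P_eq_zero hj0 (eq_one_of_add_one _ (hfac.trans hc))
      rw [hQ, mul_zero]
    · obtain ⟨hc1, hc2⟩ := mul_eq_one2 hc
      have hvals := P_vals (x := x) (i := idx i j0) (by rw [hc2]; exact one_ne_zero)
      have hxa : x (idx i (m * k)) = 0 := by
        have := hvals (m * k - j0) (compl_mem_A hma hj0)
        rwa [idx_idx, Nat.add_sub_cancel' (le_of_lt hj0'.2.1)] at this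
      have hPa : P m (m * k) x (idx i (m * k)) = 0 := by
        apply P_eq_zero hj0
        rw [idx_idx, Nat.add_comm (m * k) j0, ← idx_idx]
        exact hc1
      have hya : (x + theta n m k x) (idx i (m * k)) = 0 := by
        rw [hy, hxa, hPa, mul_zero, add_zero]
      rw [hya, zero_mul]
  · push_neg at hcase
    have hxz : ∀ j ∈ A m (m * k), x (idx i j) = 0 := by
      intro j hj
      rcases two01 (x (idx i j)) with h0 | h1
      · exact h0
      · exact absurd h1 (hcase j hj)
    have hPi : P m (m * k) x i = 1 := P_eq_one hxz
    rw [hPi, mul_one, one_mul]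
    have hya : (x + theta n m k x) (idx i (m * k))
        = x (idx i (m * k)) + x (idx (idx i (m * k)) (m * k)) * P m (m * k) x (idx i (m * k)) :=
      hy _
    rcases two01 (x (idx i (m * k))
        + x (idx (idx i (m * k)) (m * k)) * P m (m * k) x (idx i (m * k))) with ht | ht
    · rw [hya, ht, zero_mul]
    · have hQ : P m (m * k) (x + theta n m k x) i = 1 := by
        apply P_eq_one
        intro j hj
        rw [hy, hxz j hj, zero_add, idx_idx]
        rcases two01 (x (idx i (m * k))) with hxa | hxa
        · rw [hxa, zero_add] at ht
          obtain ⟨_, hPa1⟩ := mul_eq_one2 ht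
          have hv := P_vals (x := x) (i := idx i (m * k))
            (by rw [hPa1]; exact one_ne_zero) j hj
          rw [idx_idx, Nat.add_comm (m * k) j] at hv
          rw [hv, zero_mul]
        · have hPj : P m (m * k) x (idx i j) = 0 := by
            apply P_eq_zero (compl_mem_A hma hj)
            rw [idx_idx, Nat.add_sub_cancel' (le_of_lt (mem_A.mp hj).2.1)]
            exact hxa
          rw [hPj, mul_zero]
      rw [hQ, mul_one, hya]

lemma chi_pow {n m : ℕ} (hm : m ≠ 0) (j : ℕ) (x : Fin n → ZMod 2) :
    (theta n m 0 + theta n m 1)^[2 ^ j] x = x + theta n m (2 ^ j) x := by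
  induction j generalizing x with
  | zero =>
    simp only [pow_zero, Function.iterate_one, Pi.add_apply]
    rw [show theta n m 0 = id by simp [theta]]
    rfl
  | succ j ih =>
    rw [pow_succ, mul_two, Function.iterate_add_apply, ih, ih]
    funext i
    rw [Pi.add_apply, Pi.add_apply, Pi.add_apply,
      doubling (2 ^ j) hm (by positivity) x i,
      show 2 * 2 ^ j = 2 ^ j + 2 ^ j by ring]
    have h2 : ∀ u : ZMod 2, u + u = 0 := by decide
    rw [add_assoc, ← add_assoc (theta n m (2 ^ j) x i), h2 (theta n m (2 ^ j) x i), zero_add]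

end Stmt17Aux

open Stmt17Aux in
theorem stmt17 (n m : ℕ) (hn : 1 ≤ n) (hm : 2 ≤ m) (hmn : ¬ m ∣ n)
    (j : ℕ) (hj : 2 ^ j ≤ n / m) (x : Fin n → ZMod 2) :
    ((theta n m 0 + theta n m 1)^[2 ^ j] x = x ↔ theta n m (2 ^ j) x = 0) ∧
    (theta n m (2 ^ j) x = 0 ↔
      ∀ i : Fin n, ¬ (x (idx i (2 ^ j * m)) = 1 ∧
        ∀ t : ℕ, 1 ≤ t → t ≤ 2 ^ j * m - 1 → ¬ m ∣ t → x (idx i t) = 0)) := by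
  have hm0 : m ≠ 0 := by omega
  have hk : (2 : ℕ) ^ j ≠ 0 := by positivity
  constructor
  · rw [chi_pow hm0 j x]
    exact add_eq_left
  · rw [funext_iff]
    apply forall_congr'
    intro i
    rw [Pi.zero_apply, theta_apply hk, show m * 2 ^ j = 2 ^ j * m from mul_comm m _]
    have ha2 : 2 ≤ 2 ^ j * m := by
      calc 2 ≤ m := hm
      _ ≤ 2 ^ j * m := Nat.le_mul_of_pos_left m (by positivity)
    have hmemt : ∀ t : ℕ, t ∈ A m (2 ^ j * m) ↔ (1 ≤ t ∧ t ≤ 2 ^ j * m - 1 ∧ ¬ m ∣ t) := by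
      intro t
      rw [mem_A]
      omega
    constructor
    · intro h hcon
      obtain ⟨h1, h2⟩ := hcon
      have hP : P m (2 ^ j * m) x i = 1 := P_eq_one (fun t htA => by
        obtain ⟨ht1, ht2, ht3⟩ := (hmemt t).mp htA
        exact h2 t ht1 ht2 ht3)
      rw [h1, hP, one_mul] at h
      exact one_ne_zero h
    · intro h
      rcases two01 (x (idx i (2 ^ j * m))) with h0 | h1
      · rw [h0, zero_mul]
      · have hnall : ¬ ∀ t : ℕ, 1 ≤ t → t ≤ 2 ^ j * m - 1 → ¬ m ∣ t → x (idx i t) = 0 := by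
          intro hall
          exact h ⟨h1, hall⟩
        push_neg at hnall
        obtain ⟨t, ht1, ht2, ht3, htx⟩ := hnall
        have htA : t ∈ A m (2 ^ j * m) := (hmemt t).mpr ⟨ht1, ht2, ht3⟩
        have hx1 : x (idx i t) = 1 := by
          rcases two01 (x (idx i t)) with h' | h'
          · exact absurd h' htx
          · exact h'
        rw [P_eq_zero htA hx1, mul_zero]
end

section
/- The map χ_{n,m} is an involution of F_2^n (i.e., χ_{n,m} ∘ χ_{n,m} = id) if and only if n ≤ 2m − 1. -/
namespace S18

lemma z2cases (a : ZMod 2) : a = 0 ∨ a = 1 := by revert a; decide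

lemma z2mul (a : ZMod 2) : a * (a + 1) = 0 := by revert a; decide

lemma idx_idx {n : ℕ} (i : Fin n) (j l : ℕ) : idx (idx i j) l = idx i (j + l) := by
  apply Fin.ext
  show ((i.val + j) % n + l) % n = (i.val + (j + l)) % n
  rw [Nat.mod_add_mod, Nat.add_assoc]

lemma idx_add_n {n : ℕ} (i : Fin n) (s : ℕ) : idx i (s + n) = idx i s := by
  apply Fin.ext
  show (i.val + (s + n)) % n = (i.val + s) % n
  rw [← Nat.add_assoc, Nat.add_mod_right]

def P (n m : ℕ) (x : Fin n → ZMod 2) (i : Fin n) : ZMod 2 :=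
  ∏ j ∈ Finset.Ico 1 m, (x (idx i j) + 1)

def F (n m : ℕ) (x : Fin n → ZMod 2) (i : Fin n) : ZMod 2 :=
  x (idx i m) * P n m x i

def chi (n m : ℕ) (x : Fin n → ZMod 2) (i : Fin n) : ZMod 2 := x i + F n m x i

lemma theta_sum (n m : ℕ) (hm : 2 ≤ m) (x : Fin n → ZMod 2) :
    (theta n m 0 + theta n m 1) x = chi n m x := by
  funext i
  have h0 : theta n m 0 = id := if_pos rfl
  have h1 : theta n m 1 x i = F n m x i := by
    rw [theta, if_neg one_ne_zero]
    have hf : (Finset.Ico 1 m).filter (fun j => ¬ m ∣ j) = Finset.Ico 1 m := by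
      apply Finset.filter_true_of_mem
      intro j hj hd
      rw [Finset.mem_Ico] at hj
      exact absurd (Nat.le_of_dvd (by omega) hd) (by omega)
    simp only [mul_one, hf]
    rfl
  show theta n m 0 x i + theta n m 1 x i = _
  rw [h0, h1]; rfl

lemma pair {n m : ℕ} (x : Fin n → ZMod 2) (i : Fin n) {s t : ℕ}
    (ht : t ∈ Finset.Ico 1 m) (h : idx i s = idx i t) :
    x (idx i s) * P n m x i = 0 := by
  rw [P, ← Finset.mul_prod_erase _ _ ht, ← mul_assoc, h, z2mul, zero_mul]

lemma P_eq_zero {n m : ℕ} (x : Fin n → ZMod 2) (i : Fin n) {t : ℕ}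
    (ht : t ∈ Finset.Ico 1 m) (h : x (idx i t) = 1) : P n m x i = 0 :=
  Finset.prod_eq_zero ht (by rw [h]; decide)

lemma absorb {ι : Type*} (Q : ZMod 2) (s : Finset ι) (a b : ι → ZMod 2)
    (h : ∀ j ∈ s, Q * b j = 0) :
    Q * ∏ j ∈ s, (a j + b j + 1) = Q * ∏ j ∈ s, (a j + 1) := by
  classical
  induction s using Finset.induction_on with
  | empty => rfl
  | insert _ _ hj ih =>
    rename_i c s'
    rw [Finset.prod_insert hj, Finset.prod_insert hj]
    have hb : Q * b c = 0 := h c (Finset.mem_insert_self _ _)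
    have ih' := ih (fun j hj => h j (Finset.mem_insert_of_mem hj))
    linear_combination (a c + 1) * ih' + (∏ j ∈ s', (a j + b j + 1)) * hb

lemma F_zero {n m : ℕ} (hn : 1 ≤ n) (h : n < m) (x : Fin n → ZMod 2) (i : Fin n) :
    F n m x i = 0 := by
  have ht : m - n ∈ Finset.Ico 1 m := Finset.mem_Ico.mpr ⟨by omega, by omega⟩
  have he : idx i m = idx i (m - n) := by
    conv_lhs => rw [show m = (m - n) + n by omega]
    exact idx_add_n i _
  exact pair x i ht he

lemma F_chi (n m : ℕ) (hm : 2 ≤ m) (h1 : m < n) (h2 : n < 2 * m)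
    (x : Fin n → ZMod 2) (i : Fin n) :
    F n m (chi n m x) i = F n m x i := by
  have hr : 2*m - n ∈ Finset.Ico 1 m := Finset.mem_Ico.mpr ⟨by omega, by omega⟩
  have hidx2m : idx i (2*m) = idx i (2*m - n) := by
    conv_lhs => rw [show 2*m = (2*m - n) + n by omega]
    exact idx_add_n i _
  have key : x (idx i (2*m)) * P n m x i = 0 := pair x i hr hidx2m
  have hF : F n m x (idx i m) = x (idx i (2*m)) * P n m x (idx i m) := by
    rw [F, idx_idx, two_mul]
  show (x (idx i m) + F n m x (idx i m)) *
      ∏ j ∈ Finset.Ico 1 m, (x (idx i j) + F n m x (idx i j) + 1)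
      = x (idx i m) * P n m x i
  rcases z2cases (x (idx i m)) with h | h
  · -- x_{i+m} = 0
    have hQF : ∀ j ∈ Finset.Ico 1 m, P n m x (idx i m) * F n m x (idx i j) = 0 := by
      intro j hj
      have hFj : F n m x (idx i j) = x (idx i (j + m)) * P n m x (idx i j) := by
        rw [F, idx_idx]
      have hfac : idx (idx i m) j = idx i (j + m) := by rw [idx_idx, Nat.add_comm]
      rw [hFj, P, ← Finset.mul_prod_erase _ _ hj, hfac]
      have g : ∀ (a R S : ZMod 2), ((a+1)*R)*(a*S) = 0 := by decide
      exact g _ _ _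
    rw [h, zero_add, hF]
    rw [mul_assoc, absorb _ _ _ _ hQF]
    have hPdef : (∏ j ∈ Finset.Ico 1 m, (x (idx i j) + 1)) = P n m x i := rfl
    have g : ∀ (a Q Pv : ZMod 2), a * Pv = 0 → a * (Q * Pv) = 0 := by decide
    rw [hPdef, g _ _ _ key, zero_mul]
  · -- x_{i+m} = 1
    have hFj : ∀ j ∈ Finset.Ico 1 m, F n m x (idx i j) = 0 := by
      intro j hj
      have hj' := Finset.mem_Ico.mp hj
      have hmj : m - j ∈ Finset.Ico 1 m := Finset.mem_Ico.mpr ⟨by omega, by omega⟩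
      have he : idx (idx i j) (m - j) = idx i m := by rw [idx_idx]; congr 1; omega
      have hP : P n m x (idx i j) = 0 := P_eq_zero x (idx i j) hmj (by rw [he, h])
      rw [F, hP, mul_zero]
    have hprod : ∏ j ∈ Finset.Ico 1 m, (x (idx i j) + F n m x (idx i j) + 1)
        = P n m x i := by
      apply Finset.prod_congr rfl
      intro j hj
      rw [hFj j hj, add_zero]
    have hFP : F n m x (idx i m) * P n m x i = 0 := by
      rw [hF, mul_comm (x (idx i (2*m))), mul_assoc, key, mul_zero]
    rw [hprod, h]
    linear_combination hFP

end S18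


open S18

theorem stmt18 (n m : ℕ) (hn : 1 ≤ n) (hm : 2 ≤ m) (hmn : ¬ m ∣ n) :
    (theta n m 0 + theta n m 1) ∘ (theta n m 0 + theta n m 1) = id ↔ n ≤ 2 * m - 1 := by
  constructor
  · intro h
    by_contra hlt
    push_neg at hlt
    have hn2 : 2*m + 1 ≤ n := by
      rcases Nat.lt_or_ge n (2*m + 1) with h' | h'
      · have : n = 2*m := by omega
        exact absurd ⟨2, by omega⟩ hmn
      · exact h'
    set x : Fin n → ZMod 2 := fun i => if i.val = m ∨ i.val = 2*m then 1 else 0 with hx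
    let i0 : Fin n := ⟨0, by omega⟩
    have xval : ∀ j : ℕ, j ≤ 2*m → x (idx i0 j) = if j = m ∨ j = 2*m then 1 else 0 := by
      intro j hj
      have hv : (idx i0 j).val = j := by
        show (0 + j) % n = j
        rw [Nat.zero_add, Nat.mod_eq_of_lt (by omega)]
      rw [hx]
      simp only [hv]
    have hFx : F n m x i0 = 1 := by
      have h1 : x (idx i0 m) = 1 := by rw [xval m (by omega)]; simp
      have h2 : P n m x i0 = 1 := by
        apply Finset.prod_eq_one
        intro j hj
        have hj' := Finset.mem_Ico.mp hj
        rw [xval j (by omega), if_neg (by omega)]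
        norm_num
      rw [F, h1, h2, mul_one]
    have hchim : chi n m x (idx i0 m) = 0 := by
      have h1 : x (idx i0 m) = 1 := by rw [xval m (by omega)]; simp
      have h2 : x (idx (idx i0 m) m) = 1 := by
        rw [idx_idx, show m + m = 2*m by ring, xval (2*m) le_rfl]
        simp
      have h3 : P n m x (idx i0 m) = 1 := by
        apply Finset.prod_eq_one
        intro j hj
        have hj' := Finset.mem_Ico.mp hj
        rw [idx_idx, xval (m + j) (by omega), if_neg (by omega)]
        norm_num
      show x (idx i0 m) + x (idx (idx i0 m) m) * P n m x (idx i0 m) = 0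
      rw [h1, h2, h3]
      decide
    have hFchi : F n m (chi n m x) i0 = 0 := by
      show chi n m x (idx i0 m) * _ = 0
      rw [hchim, zero_mul]
    have hx00 : x i0 = 0 := by
      have hr : x i0 = if (0:ℕ) = m ∨ (0:ℕ) = 2*m then 1 else 0 := rfl
      rw [hr, if_neg (by omega)]
    have hs : ∀ y : Fin n → ZMod 2, (theta n m 0 + theta n m 1) y = chi n m y :=
      fun y => theta_sum n m hm y
    have heq := congrFun (congrFun h x) i0
    rw [Function.comp_apply, hs, hs] at heq
    have heq2 : x i0 + F n m x i0 + F n m (chi n m x) i0 = x i0 := heq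
    rw [hFx, hFchi, hx00] at heq2
    exact absurd heq2 (by decide)
  · intro h
    funext x i
    have hs : ∀ y : Fin n → ZMod 2, (theta n m 0 + theta n m 1) y = chi n m y :=
      fun y => theta_sum n m hm y
    show (theta n m 0 + theta n m 1) ((theta n m 0 + theta n m 1) x) i = x i
    rw [hs, hs]
    show x i + F n m x i + F n m (chi n m x) i = x i
    have hadd : ∀ a b : ZMod 2, a + b + b = a := by decide
    have hnm : n ≠ m := fun he => hmn (he ▸ dvd_refl m)
    rcases Nat.lt_or_ge n m with hc | hc
    · rw [F_zero hn hc, F_zero hn hc, add_zero, add_zero]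
    · have hc' : m < n := by omega
      rw [F_chi n m hm hc' (by omega)]
      exact hadd _ _
end
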